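/- For every k ≥ 1, the graph G_{2,k} = L(kC_5) satisfies χ(G_{2,k}) = max{ω(G_{2,k}), ⌈(5Δ(G_{2,k})+3)/6⌉}; explicitly, ⌈5k/2⌉ = max{2k, ⌈(5(3k−1)+3)/6⌉}. -/

import Mathlib

open SimpleGraph

/-- The blow-up of a graph `H` obtained by replacing each vertex with a copy of
`K_r`, joining all vertices of copies corresponding to adjacent vertices. -/
def blowup {α : Type*} (H : SimpleGraph α) (r : ℕ) : SimpleGraph (α × Fin r) where
  Adj x y := H.Adj x.1 y.1 ∨ (x.1 = y.1 ∧ x.2 ≠ y.2)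
  symm := by
    constructor
    rintro x y (h | ⟨h1, h2⟩)
    · exact Or.inl h.symm
    · exact Or.inr ⟨h1.symm, h2.symm⟩
  loopless := by constructor; rintro x (h | ⟨-, h2⟩); exacts [H.loopless.irrefl _ h, h2 rfl]

instance {α : Type*} [DecidableEq α] (H : SimpleGraph α) [DecidableRel H.Adj] (r : ℕ) :
    DecidableRel (blowup H r).Adj := fun _ _ => inferInstanceAs (Decidable (_ ∨ _))

/-- Catlin's graph `G_{t,k} = L(kC_{2t+1})`: the line graph of the odd cycle
`C_{2t+1}` with every edge given multiplicity `k`; equivalently, the blow-up of the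
cycle `C_{2t+1}` by `K_k`. -/
def catlin (t k : ℕ) : SimpleGraph (Fin (2 * t + 1) × Fin k) :=
  blowup (cycleGraph (2 * t + 1)) k


instance (t k : ℕ) : DecidableRel (catlin t k).Adj :=
  inferInstanceAs (DecidableRel (blowup (cycleGraph (2 * t + 1)) k).Adj)

open Finset

lemma catlin_adj {k : ℕ} {x y : Fin 5 × Fin k} :
    (catlin 2 k).Adj x y ↔ (cycleGraph 5).Adj x.1 y.1 ∨ (x.1 = y.1 ∧ x.2 ≠ y.2) := Iff.rfl

lemma c5_tri : ∀ a b c : Fin 5, (cycleGraph 5).Adj a b → (cycleGraph 5).Adj a c →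
    (cycleGraph 5).Adj b c → False := by decide

lemma c5_ind : ∀ a b c : Fin 5, a ≠ b → a ≠ c → b ≠ c → ¬(cycleGraph 5).Adj a b →
    ¬(cycleGraph 5).Adj a c → ¬(cycleGraph 5).Adj b c → False := by decide

lemma catlin_degree (k : ℕ) (hk : 1 ≤ k) (v : Fin 5 × Fin k) :
    (catlin 2 k).degree v = 3 * k - 1 := by
  obtain ⟨a, b⟩ := v
  rw [degree, neighborFinset_eq_filter, Finset.card_filter, Fintype.sum_prod_type]
  have hs : ∀ i : Fin 5, (∑ j : Fin k, if (catlin 2 k).Adj (a,b) (i,j) then 1 else 0)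
      = if (cycleGraph 5).Adj a i then k else if a = i then k - 1 else 0 := by
    intro i
    by_cases h : (cycleGraph 5).Adj a i
    · simp only [catlin_adj, h, true_or, if_true, sum_const, card_univ, Fintype.card_fin,
        smul_eq_mul, mul_one]
    · by_cases h2 : a = i
      · subst h2
        simp only [catlin_adj, h, false_or, true_and, if_neg h, if_pos rfl]
        rw [← Finset.card_filter]
        have : (univ.filter fun j : Fin k => b ≠ j) = univ.erase b := Finset.filter_ne univ b
        rw [this, card_erase_of_mem (mem_univ b), card_univ, Fintype.card_fin]; simp
      · simp [catlin_adj, h, h2]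
  rw [Finset.sum_congr rfl fun i _ => hs i]
  fin_cases a <;> simp +decide [Fin.sum_univ_five] <;> omega

lemma catlin_cliqueNum (k : ℕ) (hk : 1 ≤ k) : (catlin 2 k).cliqueNum = 2 * k := by
  apply le_antisymm
  · obtain ⟨s, hs⟩ := (catlin 2 k).exists_isNClique_cliqueNum
    rw [← hs.2]
    -- s is a clique; its image under fst is a clique in C5, hence has ≤ 2 elements
    have himg : (cycleGraph 5).IsClique (s.image Prod.fst : Finset (Fin 5)) := by
      intro a ha b hb hab
      simp only [Finset.coe_image, Set.mem_image, Finset.mem_coe] at ha hb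
      obtain ⟨x, hx, rfl⟩ := ha
      obtain ⟨y, hy, rfl⟩ := hb
      have hxy : x ≠ y := fun h => hab (by rw [h])
      have := hs.1 hx hy hxy
      rcases catlin_adj.mp this with h | ⟨h, -⟩
      · exact h
      · exact absurd h hab
    have hcard2 : (s.image Prod.fst).card ≤ 2 := by
      by_contra hgt
      push_neg at hgt
      obtain ⟨a, b, c, ha, hb, hc, hab, hac, hbc⟩ := Finset.two_lt_card_iff.mp hgt
      exact c5_tri a b c (himg ha hb hab) (himg ha hc hac) (himg hb hc hbc)
    have hsub : s ⊆ (s.image Prod.fst) ×ˢ (Finset.univ : Finset (Fin k)) := by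
      intro x hx
      rw [Finset.mem_product]
      exact ⟨Finset.mem_image_of_mem _ hx, Finset.mem_univ _⟩
    calc s.card ≤ ((s.image Prod.fst) ×ˢ (Finset.univ : Finset (Fin k))).card :=
          Finset.card_le_card hsub
      _ = (s.image Prod.fst).card * k := by
          rw [Finset.card_product, Finset.card_univ, Fintype.card_fin]
      _ ≤ 2 * k := Nat.mul_le_mul_right k hcard2
  · have hclique : (catlin 2 k).IsClique
        ((({0, 1} : Finset (Fin 5)) ×ˢ (Finset.univ : Finset (Fin k)) : Finset _) : Set _) := by
      intro x hx y hy hxy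
      simp only [Finset.coe_product, Set.mem_prod, Finset.mem_coe, Finset.mem_insert,
        Finset.mem_singleton] at hx hy
      rw [catlin_adj]
      by_cases h : x.1 = y.1
      · exact Or.inr ⟨h, fun h2 => hxy (Prod.ext h h2)⟩
      · refine Or.inl ?_
        rcases hx.1 with h1 | h1 <;> rcases hy.1 with h2 | h2 <;> rw [h1, h2] <;>
          first | (exact absurd (h1.trans h2.symm) h) | decide
    have hcard : ((({0, 1} : Finset (Fin 5)) ×ˢ (Finset.univ : Finset (Fin k))) : Finset _).card
        = 2 * k := by
      rw [Finset.card_product, Finset.card_univ, Fintype.card_fin]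
      congr 1
    calc 2 * k = _ := hcard.symm
      _ ≤ (catlin 2 k).cliqueNum := IsClique.card_le_cliqueNum (tc := hclique)

/-- Explicit coloring function of `catlin 2 k` with `(5k+1)/2` colors. -/
def cfun (k : ℕ) (x : Fin 5 × Fin k) : ℕ :=
  let a := k / 2
  let a' := k - a
  let j := x.2.val
  match x.1.val with
  | 0 => if j < a' then j else 2 * k + (j - a')
  | 1 => k + j
  | 2 => j
  | 3 => if j < a then k + a' + j else 2 * k + (j - a)
  | _ => a' + j

lemma c5_adj_cases : ∀ i i' : Fin 5, (cycleGraph 5).Adj i i' →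
    (i.val = 0 ∧ i'.val = 1) ∨ (i.val = 1 ∧ i'.val = 0) ∨
    (i.val = 1 ∧ i'.val = 2) ∨ (i.val = 2 ∧ i'.val = 1) ∨
    (i.val = 2 ∧ i'.val = 3) ∨ (i.val = 3 ∧ i'.val = 2) ∨
    (i.val = 3 ∧ i'.val = 4) ∨ (i.val = 4 ∧ i'.val = 3) ∨
    (i.val = 4 ∧ i'.val = 0) ∨ (i.val = 0 ∧ i'.val = 4) := by decide

lemma catlin_colorable (k : ℕ) : (catlin 2 k).Colorable ((5 * k + 1) / 2) := by
  rw [colorable_iff_exists_bdd_nat_coloring]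
  refine ⟨Coloring.mk (cfun k) ?_, ?_⟩
  · rintro ⟨i, j⟩ ⟨i', j'⟩ hadj
    have hj := j.isLt
    have hj' := j'.isLt
    rcases catlin_adj.mp hadj with h | ⟨h1, h2⟩
    · -- cycle-adjacent: different fibers
      have hii' : (i.val = 0 ∧ i'.val = 1) ∨ (i.val = 1 ∧ i'.val = 0) ∨
          (i.val = 1 ∧ i'.val = 2) ∨ (i.val = 2 ∧ i'.val = 1) ∨
          (i.val = 2 ∧ i'.val = 3) ∨ (i.val = 3 ∧ i'.val = 2) ∨
          (i.val = 3 ∧ i'.val = 4) ∨ (i.val = 4 ∧ i'.val = 3) ∨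
          (i.val = 4 ∧ i'.val = 0) ∨ (i.val = 0 ∧ i'.val = 4) :=
        c5_adj_cases i i' h
      simp only [cfun, Ne]
      rcases hii' with ⟨h1,h2⟩|⟨h1,h2⟩|⟨h1,h2⟩|⟨h1,h2⟩|⟨h1,h2⟩|⟨h1,h2⟩|⟨h1,h2⟩|⟨h1,h2⟩|⟨h1,h2⟩|⟨h1,h2⟩ <;>
        rw [h1, h2] <;> simp only [] <;> first | (split_ifs <;> omega) | omega
    · -- same fiber, different j
      have h2' : j.val ≠ j'.val := fun h => h2 (Fin.ext h)
      have h1' : i.val = i'.val := congrArg Fin.val h1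
      simp only [cfun, Ne]
      rw [← h1']
      have : i.val < 5 := i.isLt
      interval_cases hi : i.val <;> simp only [] <;> first | (split_ifs <;> omega) | omega
  · rintro ⟨i, j⟩
    have hj := j.isLt
    show cfun k (i, j) < (5 * k + 1) / 2
    simp only [cfun]
    have : i.val < 5 := i.isLt
    interval_cases hi : i.val <;> simp only [] <;> first | (split_ifs <;> omega) | omega

lemma catlin_color_lb (k n : ℕ) (h : (catlin 2 k).Colorable n) : (5 * k + 1) / 2 ≤ n := by
  obtain ⟨C⟩ := h
  have hcard : (Finset.univ : Finset (Fin 5 × Fin k)).card = 5 * k := by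
    rw [Finset.card_univ, Fintype.card_prod, Fintype.card_fin, Fintype.card_fin]
  have hfib : ∀ c : Fin n, (Finset.univ.filter fun x : Fin 5 × Fin k => C x = c).card ≤ 2 := by
    intro c
    by_contra hgt
    push_neg at hgt
    obtain ⟨x, y, z, hx, hy, hz, hxy, hxz, hyz⟩ := Finset.two_lt_card_iff.mp hgt
    simp only [Finset.mem_filter] at hx hy hz
    have nadj : ∀ u v : Fin 5 × Fin k, u ≠ v → C u = c → C v = c →
        u.1 ≠ v.1 ∧ ¬(cycleGraph 5).Adj u.1 v.1 := by
      intro u v huv hcu hcv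
      have hna : ¬(catlin 2 k).Adj u v := fun ha => C.valid ha (hcu.trans hcv.symm)
      rw [catlin_adj] at hna
      push_neg at hna
      refine ⟨fun h1 => huv (Prod.ext h1 (hna.2 h1)), hna.1⟩
    obtain ⟨e1, n1⟩ := nadj x y hxy hx.2 hy.2
    obtain ⟨e2, n2⟩ := nadj x z hxz hx.2 hz.2
    obtain ⟨e3, n3⟩ := nadj y z hyz hy.2 hz.2
    exact c5_ind x.1 y.1 z.1 e1 e2 e3 n1 n2 n3
  have := Finset.card_eq_sum_card_fiberwise
    (f := C) (s := (Finset.univ : Finset (Fin 5 × Fin k))) (t := Finset.univ)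
    (fun x _ => Finset.mem_univ _)
  rw [hcard] at this
  have hle : 5 * k ≤ n * 2 := by
    rw [this]
    calc ∑ c ∈ Finset.univ, (Finset.univ.filter fun x : Fin 5 × Fin k => C x = c).card
        ≤ ∑ _c ∈ (Finset.univ : Finset (Fin n)), 2 := Finset.sum_le_sum fun c _ => hfib c
      _ = n * 2 := by rw [Finset.sum_const, Finset.card_univ, Fintype.card_fin, smul_eq_mul]
  omega

lemma catlin_chrom (k : ℕ) : (catlin 2 k).chromaticNumber = (((5 * k + 1) / 2 : ℕ) : ℕ∞) := by
  apply le_antisymm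
  · exact (catlin_colorable k).chromaticNumber_le
  · rw [SimpleGraph.chromaticNumber]
    exact le_iInf₂ fun n hn => by exact_mod_cast catlin_color_lb k n hn

/-- For every `k ≥ 1`, the graph `G_{2,k} = L(kC_5)` satisfies
`χ(G_{2,k}) = max{ω(G_{2,k}), ⌈(5Δ(G_{2,k})+3)/6⌉}`; explicitly,
`⌈5k/2⌉ = max{2k, ⌈(5(3k−1)+3)/6⌉}`. -/
theorem catlin_tight_example (k : ℕ) (hk : 1 ≤ k) :
    (catlin 2 k).chromaticNumber =
      ((max (catlin 2 k).cliqueNum ((5 * (catlin 2 k).maxDegree + 3 + 5) / 6) : ℕ) : ℕ∞) ∧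
    (5 * k + 1) / 2 = max (2 * k) ((5 * (3 * k - 1) + 3 + 5) / 6) := by
  have hΔ : (catlin 2 k).maxDegree = 3 * k - 1 := by
    have : Nonempty (Fin 5 × Fin k) := ⟨(0, ⟨0, hk⟩)⟩
    apply le_antisymm
    · exact maxDegree_le_of_forall_degree_le (catlin 2 k) (3 * k - 1) fun v => (catlin_degree k hk v).le
    · obtain ⟨v, hv⟩ := (catlin 2 k).exists_maximal_degree_vertex
      rw [hv, catlin_degree k hk v]
  rw [catlin_cliqueNum k hk, hΔ, catlin_chrom k]
  constructor
  · congr 1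
    omega
  · omega
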